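/- Let A be an associative algebra over a field k and let R : A → A be a linear map satisfying the modified Yang-Baxter equation (1.3) with respect to the commutator bracket [a,b] = ab − ba: R([R(X),Y] − [R(Y),X]) − [R(X),R(Y)] − [X,Y] = 0 for all X, Y ∈ A. Then the bilinear operation a*b = ab + ba + [R(a), b] makes A a left-symmetric algebra: As(X,Y,Z) = As(Y,X,Z) for all X, Y, Z ∈ A, where As(X,Y,Z) = (X*Y)*Z − X*(Y*Z). -/
import Mathlib


/-- If `A` is an associative algebra and `R : A → A` satisfies the
modified Yang-Baxter equation (1.3) for the commutator bracket, then
`a*b = ab + ba + [R(a),b]` is a left-symmetric operation. -/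
theorem stmt_13 {k A : Type*} [Field k] [Ring A] [Algebra k A]
    (R : A →ₗ[k] A)
    (hMYB : ∀ X Y,
      R ((R X * Y - Y * R X) - (R Y * X - X * R Y)) -
        (R X * R Y - R Y * R X) - (X * Y - Y * X) = 0)
    (mul : A → A → A)
    (hmul : ∀ a b, mul a b = a * b + b * a + (R a * b - b * R a))
    (As : A → A → A → A)
    (hAs : ∀ X Y Z, As X Y Z = mul (mul X Y) Z - mul X (mul Y Z)) :
    ∀ X Y Z, As X Y Z = As Y X Z := by
  intro X Y Z
  have key := hMYB X Y
  simp only [hAs, hmul, map_add, map_sub] at key ⊢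
  linear_combination (norm := noncomm_ring) key * Z - Z * key
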